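/- arXiv:1312.3805 — 2 statements merged into one kernel-verified Lean document; each statement's English description precedes it below -/
import Mathlib

section
/- Let A be a real n×n nonsingular matrix all of whose leading principal submatrices A^{(j)}, j = 1,…,n, are nonsingular. Write N = ‖A‖ and N₋ = max_{j=1,…,n} ‖(A^{(j)})⁻¹‖. Then for all 0 < h < k ≤ n, the Schur complement S = S(A^{(h)}, A^{(k)}) satisfies ‖S‖ ≤ N + N₋N² and ‖S⁻¹‖ ≤ N₋; in particular the norms of all pivot blocks arising in GENP or block Gaussian elimination applied to A are at most N + N₋N², and the norms of their inverses are at most N₋. -/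
open Matrix MeasureTheory ProbabilityTheory

/-- The `j`-th largest singular value (1-indexed; `0` for `j` out of range). -/
noncomputable def sval {m n : ℕ} (A : Matrix (Fin m) (Fin n) ℝ) (j : ℕ) : ℝ :=
  if h : 1 ≤ j ∧ j ≤ n then
    Real.sqrt ((Matrix.isHermitian_conjTranspose_mul_self A).eigenvalues
      (Tuple.sort (Matrix.isHermitian_conjTranspose_mul_self A).eigenvalues ⟨n - j, by omega⟩))
  else 0

/-- The spectral norm of a real matrix. -/
noncomputable def spec {m n : ℕ} (A : Matrix (Fin m) (Fin n) ℝ) : ℝ :=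
  ‖LinearMap.toContinuousLinearMap (Matrix.toEuclideanLin A)‖

open Classical in
/-- The Moore–Penrose pseudo-inverse. -/
noncomputable def pinv {m n : ℕ} (M : Matrix (Fin m) (Fin n) ℝ) : Matrix (Fin n) (Fin m) ℝ :=
  if h : ∃ X : Matrix (Fin n) (Fin m) ℝ,
      M * X * M = M ∧ X * M * X = X ∧ (M * X)ᵀ = M * X ∧ (X * M)ᵀ = X * M
  then h.choose else 0

/-- Leading (northwestern) `k × l` submatrix. -/
def lead {m n : ℕ} (A : Matrix (Fin m) (Fin n) ℝ) (k l : ℕ) (hk : k ≤ m) (hl : l ≤ n) :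
    Matrix (Fin k) (Fin l) ℝ :=
  A.submatrix (Fin.castLE hk) (Fin.castLE hl)

/-- Schur complement of the leading `h × h` block in `A`. -/
noncomputable def schur {n : ℕ} (A : Matrix (Fin n) (Fin n) ℝ) (h : ℕ) (hh : h ≤ n) :
    Matrix (Fin (n - h)) (Fin (n - h)) ℝ :=
  A.submatrix (fun i => (⟨h + i.1, by have := i.isLt; omega⟩ : Fin n))
      (fun j => (⟨h + j.1, by have := j.isLt; omega⟩ : Fin n))
    - A.submatrix (fun i => (⟨h + i.1, by have := i.isLt; omega⟩ : Fin n)) (Fin.castLE hh)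
      * (A.submatrix (Fin.castLE hh) (Fin.castLE hh))⁻¹
      * A.submatrix (Fin.castLE hh) (fun j => (⟨h + j.1, by have := j.isLt; omega⟩ : Fin n))

/-- The distribution of a standard Gaussian random `m × n` matrix (as entrywise functions). -/
noncomputable def stdGaussianM (m n : ℕ) : Measure (Fin m → Fin n → ℝ) :=
  Measure.pi fun _ => Measure.pi fun _ => gaussianReal 0 1

/-- The `m × n` "diagonal" matrix of singular values of `A` in nonincreasing order. -/
noncomputable def svdSigma {m n : ℕ} (A : Matrix (Fin m) (Fin n) ℝ) : Matrix (Fin m) (Fin n) ℝ :=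
  Matrix.of fun i j => if (i : ℕ) = (j : ℕ) then sval A ((i : ℕ) + 1) else 0
section Aux
open scoped Matrix.Norms.L2Operator

lemma spec_eq_norm {m n : ℕ} (A : Matrix (Fin m) (Fin n) ℝ) : spec A = ‖A‖ := rfl

lemma sum_comp_inj {l n : ℕ} (g : Fin l → Fin n) (hg : Function.Injective g)
    (F : Fin n → ℝ) (hF : ∀ j', j' ∉ Set.range g → F j' = 0) :
    ∑ j', F j' = ∑ j, F (g j) := by
  have h1 : ∑ j' ∈ Finset.univ.image g, F j' = ∑ j, F (g j) :=
    Finset.sum_image (fun a _ b _ hab => hg hab)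
  rw [← h1]
  refine (Finset.sum_subset (Finset.subset_univ _) fun j' _ hj' => hF j' ?_).symm
  exact fun hr => hj' (Finset.mem_image.2 ⟨hr.choose, Finset.mem_univ _, hr.choose_spec⟩)

lemma norm_submatrix_le {m n k l : ℕ} (A : Matrix (Fin m) (Fin n) ℝ)
    (f : Fin k → Fin m) (g : Fin l → Fin n) (hf : Function.Injective f)
    (hg : Function.Injective g) : ‖A.submatrix f g‖ ≤ ‖A‖ := by
  rw [Matrix.l2_opNorm_def]
  refine ContinuousLinearMap.opNorm_le_bound _ (norm_nonneg A) fun x => ?_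
  have hyf : ∀ (j' : Fin n), True := fun _ => trivial
  let y : EuclideanSpace ℝ (Fin n) :=
    (WithLp.equiv 2 (Fin n → ℝ)).symm (Function.extend g (fun j => x j) 0)
  have hyg : ∀ j, y (g j) = x j := fun j => hg.extend_apply _ _ _
  have hy0 : ∀ j', j' ∉ Set.range g → y j' = 0 := by
    intro j' hj'
    have hne : ¬ ∃ a, g a = j' := fun ⟨a, ha⟩ => hj' ⟨a, ha⟩
    show Function.extend g (fun j => x j) 0 j' = 0
    rw [Function.extend_apply' _ _ _ hne]; rfl
  have hny : ‖y‖ = ‖x‖ := by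
    rw [EuclideanSpace.norm_eq, EuclideanSpace.norm_eq]
    congr 1
    rw [sum_comp_inj g hg (fun j' => ‖y j'‖ ^ 2) (fun j' hj' => by show ‖y j'‖ ^ 2 = 0; rw [hy0 j' hj']; simp)]
    simp only [hyg]
  have hmv : ∀ i, ((A.submatrix f g) *ᵥ (fun j => x j)) i = (A *ᵥ (fun j' => y j')) (f i) := by
    intro i
    simp only [mulVec, dotProduct, submatrix_apply]
    rw [sum_comp_inj g hg (fun j' => A (f i) j' * y j')
      (fun j' hj' => by show A (f i) j' * y j' = 0; rw [hy0 j' hj']; simp)]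
    simp only [hyg]
  calc ‖(Matrix.toEuclideanLin ≪≫ₗ LinearMap.toContinuousLinearMap) (A.submatrix f g) x‖
      = Real.sqrt (∑ i, ‖(A *ᵥ (fun j' => y j')) (f i)‖ ^ 2) := by
        rw [EuclideanSpace.norm_eq]
        congr 1
        refine Finset.sum_congr rfl fun i _ => ?_
        rw [show ((Matrix.toEuclideanLin ≪≫ₗ LinearMap.toContinuousLinearMap) (A.submatrix f g) x) i
            = ((A.submatrix f g) *ᵥ (fun j => x j)) i from rfl, hmv i]
    _ ≤ Real.sqrt (∑ i', ‖(A *ᵥ (fun j' => y j')) i'‖ ^ 2) := by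
        apply Real.sqrt_le_sqrt
        have h2 : ∑ i' ∈ Finset.univ.image f, ‖(A *ᵥ (fun j' => y j')) i'‖ ^ 2
            = ∑ i, ‖(A *ᵥ (fun j' => y j')) (f i)‖ ^ 2 :=
          Finset.sum_image (fun a _ b _ hab => hf hab)
        rw [← h2]
        exact Finset.sum_le_sum_of_subset_of_nonneg (Finset.subset_univ _)
          (fun _ _ _ => by positivity)
    _ = ‖(WithLp.equiv 2 (Fin m → ℝ)).symm (A *ᵥ (fun j' => y j'))‖ := by
        rw [EuclideanSpace.norm_eq]; rfl
    _ ≤ ‖A‖ * ‖y‖ := Matrix.l2_opNorm_mulVec A y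
    _ = ‖A‖ * ‖x‖ := by rw [hny]

lemma spec_submatrix_le {m n k l : ℕ} (A : Matrix (Fin m) (Fin n) ℝ)
    (f : Fin k → Fin m) (g : Fin l → Fin n) (hf : Function.Injective f)
    (hg : Function.Injective g) : spec (A.submatrix f g) ≤ spec A := by
  rw [spec_eq_norm, spec_eq_norm]; exact norm_submatrix_le A f g hf hg

lemma spec_mul_le {m n l : ℕ} (A : Matrix (Fin m) (Fin n) ℝ) (B : Matrix (Fin n) (Fin l) ℝ) :
    spec (A * B) ≤ spec A * spec B := by
  rw [spec_eq_norm, spec_eq_norm, spec_eq_norm]; exact Matrix.l2_opNorm_mul A B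

lemma spec_sub_le {m n : ℕ} (A B : Matrix (Fin m) (Fin n) ℝ) :
    spec (A - B) ≤ spec A + spec B := by
  rw [spec_eq_norm, spec_eq_norm, spec_eq_norm]; exact norm_sub_le A B

lemma spec_nonneg {m n : ℕ} (A : Matrix (Fin m) (Fin n) ℝ) : 0 ≤ spec A := by
  rw [spec_eq_norm]; exact norm_nonneg A

end Aux

/-- If all leading blocks of `A` are nonsingular, `N = ‖A‖`, and `N₋` bounds all `‖(A^{(j)})⁻¹‖`,
then every Schur complement `S(A^{(h)}, A^{(k)})` (a pivot block of block Gaussian elimination)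
satisfies `‖S‖ ≤ N + N₋N²` and `‖S⁻¹‖ ≤ N₋`; the leading blocks `A^{(k)}` (the remaining pivot
blocks) satisfy the same bounds. -/
theorem schur_pivot_block_bounds {n : ℕ} (A : Matrix (Fin n) (Fin n) ℝ)
    (hinv : ∀ j (_ : 1 ≤ j) (h2 : j ≤ n), IsUnit (lead A j j h2 h2).det)
    (N Nm : ℝ) (hN : N = spec A)
    (hNm : ∀ j (_ : 1 ≤ j) (h2 : j ≤ n), spec (lead A j j h2 h2)⁻¹ ≤ Nm) :
    (∀ h k (h0 : 0 < h) (hhk : h < k) (hkn : k ≤ n),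
      spec (schur (lead A k k hkn hkn) h (by omega)) ≤ N + Nm * N ^ 2 ∧
      spec (schur (lead A k k hkn hkn) h (by omega))⁻¹ ≤ Nm) ∧
    (∀ k (h0 : 0 < k) (hkn : k ≤ n),
      spec (lead A k k hkn hkn) ≤ N + Nm * N ^ 2 ∧
      spec (lead A k k hkn hkn)⁻¹ ≤ Nm) := by
  classical
  have hN0 : 0 ≤ N := by rw [hN]; exact spec_nonneg A
  have hNm0 : 1 ≤ n → 0 ≤ Nm := fun hn =>
    le_trans (spec_nonneg _) (hNm 1 le_rfl hn)
  have hcastinj : ∀ {a b : ℕ} (hab : a ≤ b), Function.Injective (Fin.castLE hab) :=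
    fun hab => Fin.castLE_injective hab
  have hleadN : ∀ k (hkn : k ≤ n), spec (lead A k k hkn hkn) ≤ N := by
    intro k hkn
    rw [hN]
    exact spec_submatrix_le A _ _ (hcastinj hkn) (hcastinj hkn)
  constructor
  · intro h k h0 hhk hkn
    have hhn : h ≤ n := by omega
    have hh2 : h ≤ k := by omega
    set M := lead A k k hkn hkn with hM
    let sh : Fin (k - h) → Fin k := fun i => ⟨h + i.1, by have := i.isLt; omega⟩
    have hshinj : Function.Injective sh := fun i j hij => by
      have := congrArg Fin.val hij
      simp only [sh] at this
      exact Fin.ext (by omega)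
    set B := M.submatrix (Fin.castLE hh2) (Fin.castLE hh2) with hB
    set C := M.submatrix (Fin.castLE hh2) sh with hC
    set D := M.submatrix sh (Fin.castLE hh2) with hD
    set E := M.submatrix sh sh with hE
    have hBlead : B = lead A h h hhn hhn := by ext i j; rfl
    have hBu : IsUnit B.det := by rw [hBlead]; exact hinv h h0 hhn
    haveI : Invertible B := B.invertibleOfIsUnitDet hBu
    let e : Fin h ⊕ Fin (k - h) ≃ Fin k := finSumFinEquiv.trans (finCongr (by omega))
    have he1 : ∀ i, e (Sum.inl i) = Fin.castLE hh2 i := by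
      intro i; ext; simp [e, finSumFinEquiv]
    have he2 : ∀ j, e (Sum.inr j) = sh j := by
      intro j; ext; simp [e, finSumFinEquiv, sh]
    have hFB : M.submatrix e e = Matrix.fromBlocks B C D E := by
      ext i j
      cases i with
      | inl i => cases j with
        | inl j => simp [Matrix.fromBlocks, he1, hB]
        | inr j => simp [Matrix.fromBlocks, he1, he2, hC]
      | inr i => cases j with
        | inl j => simp [Matrix.fromBlocks, he1, he2, hD]
        | inr j => simp [Matrix.fromBlocks, he2, hE]
    have hdet : M.det = B.det * (E - D * B⁻¹ * C).det := by
      have h1 := Matrix.det_fromBlocks₁₁ B C D E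
      rw [invOf_eq_nonsing_inv] at h1
      rw [← h1, ← hFB, Matrix.det_submatrix_equiv_self]
    have hMu : IsUnit M.det := hinv k (by omega) hkn
    have hSu : IsUnit (E - D * B⁻¹ * C).det := by
      rw [hdet] at hMu; exact isUnit_of_mul_isUnit_right hMu
    haveI : Invertible (E - D * ⅟B * C) := by
      rw [invOf_eq_nonsing_inv]; exact (E - D * B⁻¹ * C).invertibleOfIsUnitDet hSu
    haveI : Invertible (Matrix.fromBlocks B C D E) := Matrix.fromBlocks₁₁Invertible B C D E
    have hIF := Matrix.invOf_fromBlocks₁₁_eq B C D E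
    have hinvM : (Matrix.fromBlocks B C D E)⁻¹ = M⁻¹.submatrix e e := by
      rw [← hFB, Matrix.inv_submatrix_equiv]
    have hS22 : (E - D * B⁻¹ * C)⁻¹
        = M⁻¹.submatrix (fun i => e (Sum.inr i)) (fun j => e (Sum.inr j)) := by
      have h3 := hIF.symm.trans
        ((invOf_eq_nonsing_inv (Matrix.fromBlocks B C D E)).trans hinvM)
      have h4 := congrArg Matrix.toBlocks₂₂ h3
      rw [Matrix.toBlocks_fromBlocks₂₂] at h4
      have h5 : (E - D * B⁻¹ * C)⁻¹ = ⅟(E - D * ⅟B * C) := by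
        simp only [invOf_eq_nonsing_inv]
      rw [h5, h4]
      ext i j; rfl
    have hEN : spec E ≤ N := le_trans (spec_submatrix_le M sh sh hshinj hshinj) (hleadN k hkn)
    have hCN : spec C ≤ N :=
      le_trans (spec_submatrix_le M _ sh (hcastinj hh2) hshinj) (hleadN k hkn)
    have hDN : spec D ≤ N :=
      le_trans (spec_submatrix_le M sh _ hshinj (hcastinj hh2)) (hleadN k hkn)
    have hBiNm : spec B⁻¹ ≤ Nm := by rw [hBlead]; exact hNm h h0 hhn
    have hDBC : spec (D * B⁻¹ * C) ≤ Nm * N ^ 2 := by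
      calc spec (D * B⁻¹ * C) ≤ spec (D * B⁻¹) * spec C := spec_mul_le _ _
        _ ≤ (spec D * spec B⁻¹) * spec C :=
          mul_le_mul_of_nonneg_right (spec_mul_le _ _) (spec_nonneg _)
        _ ≤ (N * Nm) * N :=
          mul_le_mul (mul_le_mul hDN hBiNm (spec_nonneg _) hN0) hCN (spec_nonneg _)
            (mul_nonneg hN0 (hNm0 (by omega)))
        _ = Nm * N ^ 2 := by ring
    constructor
    · show spec (E - D * B⁻¹ * C) ≤ N + Nm * N ^ 2
      exact le_trans (spec_sub_le E (D * B⁻¹ * C)) (add_le_add hEN hDBC)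
    · show spec (E - D * B⁻¹ * C)⁻¹ ≤ Nm
      rw [hS22]
      exact le_trans
        (spec_submatrix_le M⁻¹ _ _ (e.injective.comp Sum.inr_injective)
          (e.injective.comp Sum.inr_injective))
        (hNm k (by omega) hkn)
  · intro k h0 hkn
    refine ⟨le_trans (hleadN k hkn) ?_, hNm k h0 hkn⟩
    nlinarith [hNm0 (le_trans h0 hkn), hN0]
end

section
/- Let A be a real m×n matrix of rank ρ with SVD A = S_A Σ_A T_Aᵀ, where S_A and T_A are orthogonal m×m and n×n matrices and Σ_A is the m×n diagonal matrix of singular values in nonincreasing order. Let F be a real r×m matrix and H a real n×r matrix with r ≤ ρ, and set F̂ = F S_A and Ĥ = T_Aᵀ H. Then σ_j(FA) ≥ σ_k(A)·σ_j(F̂_{r,k}) for all k ≤ m and all j, and σ_j(AH) ≥ σ_l(A)·σ_j(Ĥ_{l,r}) for all l ≤ n and all j. -/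
open Matrix MeasureTheory ProbabilityTheory

-- AUX START

lemma sval_nonneg {m n : ℕ} (A : Matrix (Fin m) (Fin n) ℝ) (j : ℕ) : 0 ≤ sval A j := by
  unfold sval; split
  · exact Real.sqrt_nonneg _
  · exact le_refl 0

lemma sval_out {m n : ℕ} (A : Matrix (Fin m) (Fin n) ℝ) {j : ℕ} (h : ¬(1 ≤ j ∧ j ≤ n)) :
    sval A j = 0 := dif_neg h

lemma sval_in {m n : ℕ} (A : Matrix (Fin m) (Fin n) ℝ) {j : ℕ} (h1 : 1 ≤ j) (h2 : j ≤ n) :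
    sval A j = Real.sqrt ((Matrix.isHermitian_conjTranspose_mul_self A).eigenvalues
      (Tuple.sort (Matrix.isHermitian_conjTranspose_mul_self A).eigenvalues ⟨n - j, by omega⟩)) :=
  dif_pos ⟨h1, h2⟩

lemma sval_antitone {m n : ℕ} (A : Matrix (Fin m) (Fin n) ℝ) {i j : ℕ}
    (h1 : 1 ≤ i) (hij : i ≤ j) (h2 : j ≤ n) : sval A j ≤ sval A i := by
  rw [sval_in A h1 (le_trans hij h2), sval_in A (le_trans h1 hij) h2]
  apply Real.sqrt_le_sqrt
  exact Tuple.monotone_sort (Matrix.isHermitian_conjTranspose_mul_self A).eigenvalues (show (⟨n - j, by omega⟩ : Fin n) ≤ ⟨n - i, by omega⟩ by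
    simp [Fin.le_def]; omega)

lemma dot_eq_sum_aux {p : ℕ} (M : Matrix (Fin p) (Fin p) ℝ) (hM : M.IsHermitian) (x : Fin p → ℝ) :
    x ⬝ᵥ (M *ᵥ x) = ∑ i, hM.eigenvalues i * ((hM.eigenvectorBasis i) ⬝ᵥ x)^2 ∧
    x ⬝ᵥ x = ∑ i, ((hM.eigenvectorBasis i) ⬝ᵥ x)^2 := by
  set U : Matrix (Fin p) (Fin p) ℝ := (hM.eigenvectorUnitary : Matrix (Fin p) (Fin p) ℝ) with hUdef
  have hU1 : U * star U = 1 := Matrix.mem_unitaryGroup_iff.mp (hM.eigenvectorUnitary).2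
  have hu : ∀ j, (star U *ᵥ x) j = (hM.eigenvectorBasis j) ⬝ᵥ x := by
    intro j
    simp only [mulVec, dotProduct]
    refine Finset.sum_congr rfl fun i _ => ?_
    simp [hUdef, Matrix.star_apply, mul_comm]
  have key : ∀ D : Matrix (Fin p) (Fin p) ℝ,
      x ⬝ᵥ ((U * D * star U) *ᵥ x) = (star U *ᵥ x) ⬝ᵥ (D *ᵥ (star U *ᵥ x)) := by
    intro D
    rw [← mulVec_mulVec, ← mulVec_mulVec, dotProduct_mulVec, ← mulVec_transpose,
      show (Uᵀ : Matrix (Fin p) (Fin p) ℝ) = star U by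
        rw [Matrix.star_eq_conjTranspose, Matrix.conjTranspose_eq_transpose_of_trivial]]
  constructor
  · conv_lhs => rw [hM.spectral_theorem]
    rw [show (RCLike.ofReal ∘ hM.eigenvalues : Fin p → ℝ) = hM.eigenvalues from rfl]
    rw [Unitary.conjStarAlgAut_apply, ← hUdef]
    rw [key (diagonal hM.eigenvalues)]
    simp only [dotProduct, mulVec_diagonal, hu]
    refine Finset.sum_congr rfl fun i _ => by ring
  · conv_lhs => rw [show x ⬝ᵥ x = x ⬝ᵥ ((U * 1 * star U) *ᵥ x) by
      rw [mul_one, hU1, one_mulVec]]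
    rw [key 1, one_mulVec]
    simp only [dotProduct, hu]
    refine Finset.sum_congr rfl fun i _ => by ring

lemma dot_eq_zero_of_mem_span {p : ℕ} (b : OrthonormalBasis (Fin p) ℝ (EuclideanSpace ℝ (Fin p)))
    (S : Set (Fin p)) (i : Fin p) (hi : i ∉ S)
    (x : EuclideanSpace ℝ (Fin p)) (hx : x ∈ Submodule.span ℝ (⇑b '' S)) :
    (b i) ⬝ᵥ x = 0 := by
  let f : EuclideanSpace ℝ (Fin p) →ₗ[ℝ] ℝ :=
    { toFun := fun y => (b i) ⬝ᵥ y,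
      map_add' := fun u v => dotProduct_add _ u v,
      map_smul' := fun c u => by
        show (b i) ⬝ᵥ (c • u) = c * ((b i) ⬝ᵥ u)
        exact dotProduct_smul c _ u }
  have hle : Submodule.span ℝ (⇑b '' S) ≤ LinearMap.ker f := by
    rw [Submodule.span_le]
    rintro _ ⟨s, hs, rfl⟩
    have hne : i ≠ s := fun h => hi (h ▸ hs)
    have h0 : (inner ℝ (b i) (b s) : ℝ) = 0 := b.orthonormal.2 hne
    rw [EuclideanSpace.inner_eq_star_dotProduct] at h0
    simp only [SetLike.mem_coe, LinearMap.mem_ker]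
    simp only [star_trivial] at h0; rw [dotProduct_comm] at h0; exact h0
  exact hle hx

lemma rayleigh_le_span {p : ℕ} (M : Matrix (Fin p) (Fin p) ℝ) (hM : M.IsHermitian)
    (S : Set (Fin p)) (t : ℝ) (hS : ∀ s ∈ S, hM.eigenvalues s ≤ t)
    (x : EuclideanSpace ℝ (Fin p)) (hx : x ∈ Submodule.span ℝ (⇑hM.eigenvectorBasis '' S)) :
    x ⬝ᵥ (M *ᵥ x) ≤ t * (x ⬝ᵥ x) := by
  rw [(dot_eq_sum_aux M hM x).1, (dot_eq_sum_aux M hM x).2, Finset.mul_sum]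
  refine Finset.sum_le_sum fun i _ => ?_
  by_cases hi : i ∈ S
  · exact mul_le_mul_of_nonneg_right (hS i hi) (sq_nonneg _)
  · rw [dot_eq_zero_of_mem_span _ S i hi x hx]; simp

lemma rayleigh_ge_span {p : ℕ} (M : Matrix (Fin p) (Fin p) ℝ) (hM : M.IsHermitian)
    (S : Set (Fin p)) (t : ℝ) (hS : ∀ s ∈ S, t ≤ hM.eigenvalues s)
    (x : EuclideanSpace ℝ (Fin p)) (hx : x ∈ Submodule.span ℝ (⇑hM.eigenvectorBasis '' S)) :
    t * (x ⬝ᵥ x) ≤ x ⬝ᵥ (M *ᵥ x) := by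
  rw [(dot_eq_sum_aux M hM x).1, (dot_eq_sum_aux M hM x).2, Finset.mul_sum]
  refine Finset.sum_le_sum fun i _ => ?_
  by_cases hi : i ∈ S
  · exact mul_le_mul_of_nonneg_right (hS i hi) (sq_nonneg _)
  · rw [dot_eq_zero_of_mem_span _ S i hi x hx]; simp

lemma card_top {p j : ℕ} (h1 : 1 ≤ j) (h2 : j ≤ p) :
    Fintype.card {i : Fin p // p - j ≤ (i : ℕ)} = j := by
  rw [Fintype.card_congr (Equiv.mk
    (fun s : {i : Fin p // p - j ≤ (i : ℕ)} => (⟨s.1.1 - (p - j), by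
      have := s.1.isLt; have := s.2; omega⟩ : Fin j))
    (fun a : Fin j => ⟨⟨p - j + a.1, by have := a.isLt; omega⟩, by
      show p - j ≤ p - j + a.1; omega⟩)
    (fun s => Subtype.ext (Fin.ext (by have := s.2; simp; omega)))
    (fun a => Fin.ext (by simp)))]
  exact Fintype.card_fin j

lemma card_bot {q j : ℕ} (h1 : 1 ≤ j) (h2 : j ≤ q) :
    Fintype.card {i : Fin q // (i : ℕ) ≤ q - j} = q - j + 1 := by
  rw [Fintype.card_congr (Equiv.mk
    (fun s : {i : Fin q // (i : ℕ) ≤ q - j} => (⟨s.1.1, by have := s.2; omega⟩ : Fin (q - j + 1)))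
    (fun a : Fin (q - j + 1) => ⟨⟨a.1, by have := a.isLt; omega⟩, by
      show (a : ℕ) ≤ q - j; have := a.isLt; omega⟩)
    (fun s => Subtype.ext (Fin.ext rfl))
    (fun a => Fin.ext rfl))]
  exact Fintype.card_fin _

lemma sval_le_sval {a p b q : ℕ} (X : Matrix (Fin a) (Fin p) ℝ) (Y : Matrix (Fin b) (Fin q) ℝ)
    (φ : (Fin p → ℝ) →ₗ[ℝ] (Fin q → ℝ)) (hφ : Function.Injective φ) (c : ℝ) (hc : 0 ≤ c)
    (h1 : ∀ x : Fin p → ℝ, c^2 * ((X *ᵥ x) ⬝ᵥ (X *ᵥ x)) ≤ (Y *ᵥ (φ x)) ⬝ᵥ (Y *ᵥ (φ x)))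
    (h2 : ∀ x : Fin p → ℝ, (φ x) ⬝ᵥ (φ x) ≤ x ⬝ᵥ x) (j : ℕ) :
    c * sval X j ≤ sval Y j := by
  by_cases hj : 1 ≤ j ∧ j ≤ p
  case neg =>
    rw [sval_out X hj, mul_zero]; exact sval_nonneg Y j
  obtain ⟨hj1, hjp⟩ := hj
  have hpq : p ≤ q := by
    have := LinearMap.finrank_le_finrank_of_injective hφ
    rwa [Module.finrank_fintype_fun_eq_card, Module.finrank_fintype_fun_eq_card,
      Fintype.card_fin, Fintype.card_fin] at this
  have hjq : j ≤ q := le_trans hjp hpq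
  set M : Matrix (Fin p) (Fin p) ℝ := Xᵀ * X with hMdef
  set N : Matrix (Fin q) (Fin q) ℝ := Yᵀ * Y with hNdef
  have hMh : M.IsHermitian := Matrix.isHermitian_conjTranspose_mul_self X
  have hNh : N.IsHermitian := Matrix.isHermitian_conjTranspose_mul_self Y
  set σM := Tuple.sort hMh.eigenvalues with hσM
  set σN := Tuple.sort hNh.eigenvalues with hσN
  set t1 : ℝ := hMh.eigenvalues (σM ⟨p - j, by omega⟩) with ht1
  set t2 : ℝ := hNh.eigenvalues (σN ⟨q - j, by omega⟩) with ht2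
  have hsX : sval X j = Real.sqrt t1 := sval_in X hj1 hjp
  have hsY : sval Y j = Real.sqrt t2 := sval_in Y hj1 hjq
  have hNpsd : N.PosSemidef := by
    have := Matrix.posSemidef_conjTranspose_mul_self Y
    rwa [Matrix.conjTranspose_eq_transpose_of_trivial] at this
  have ht2nn : 0 ≤ t2 := hNpsd.eigenvalues_nonneg _
  suffices hkey : c^2 * t1 ≤ t2 by
    rw [hsX, hsY, ← Real.sqrt_sq hc, ← Real.sqrt_mul (sq_nonneg c)]
    exact Real.sqrt_le_sqrt hkey
  -- subspaces
  set bM := hMh.eigenvectorBasis with hbM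
  set bN := hNh.eigenvectorBasis with hbN
  set SM : Set (Fin p) := σM '' {i : Fin p | p - j ≤ (i : ℕ)} with hSM
  set SN : Set (Fin q) := σN '' {i : Fin q | (i : ℕ) ≤ q - j} with hSN
  set famM : {i : Fin p // p - j ≤ (i : ℕ)} → EuclideanSpace ℝ (Fin p) :=
    fun i => bM (σM i.1) with hfamM
  set famN : {i : Fin q // (i : ℕ) ≤ q - j} → EuclideanSpace ℝ (Fin q) :=
    fun i => bN (σN i.1) with hfamN
  have hrangeM : Set.range famM = ⇑bM '' SM := by
    ext y
    constructor
    · rintro ⟨i, rfl⟩; exact ⟨σM i.1, ⟨i.1, i.2, rfl⟩, rfl⟩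
    · rintro ⟨s, ⟨i, hi, rfl⟩, rfl⟩; exact ⟨⟨i, hi⟩, rfl⟩
  have hrangeN : Set.range famN = ⇑bN '' SN := by
    ext y
    constructor
    · rintro ⟨i, rfl⟩; exact ⟨σN i.1, ⟨i.1, i.2, rfl⟩, rfl⟩
    · rintro ⟨s, ⟨i, hi, rfl⟩, rfl⟩; exact ⟨⟨i, hi⟩, rfl⟩
  set V : Submodule ℝ (EuclideanSpace ℝ (Fin p)) := Submodule.span ℝ (⇑bM '' SM) with hV
  set Usub : Submodule ℝ (EuclideanSpace ℝ (Fin q)) := Submodule.span ℝ (⇑bN '' SN) with hU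
  have honM : Orthonormal ℝ famM :=
    bM.orthonormal.comp _ (σM.injective.comp Subtype.val_injective)
  have honN : Orthonormal ℝ famN :=
    bN.orthonormal.comp _ (σN.injective.comp Subtype.val_injective)
  have hdimV : Module.finrank ℝ V = j := by
    rw [hV, ← hrangeM, finrank_span_eq_card honM.linearIndependent, card_top hj1 hjp]
  have hdimU : Module.finrank ℝ Usub = q - j + 1 := by
    rw [hU, ← hrangeN, finrank_span_eq_card honN.linearIndependent, card_bot hj1 hjq]
  let φe : EuclideanSpace ℝ (Fin p) →ₗ[ℝ] EuclideanSpace ℝ (Fin q) :=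
    (WithLp.linearEquiv 2 ℝ (Fin q → ℝ)).symm.toLinearMap ∘ₗ φ ∘ₗ
      (WithLp.linearEquiv 2 ℝ (Fin p → ℝ)).toLinearMap
  have hφe : Function.Injective φe :=
    (WithLp.linearEquiv 2 ℝ (Fin q → ℝ)).symm.injective.comp
      (hφ.comp (WithLp.linearEquiv 2 ℝ (Fin p → ℝ)).injective)
  set W : Submodule ℝ (EuclideanSpace ℝ (Fin q)) := V.map φe with hW
  have hdimW : Module.finrank ℝ W = j := by
    rw [← hdimV]
    exact (LinearEquiv.finrank_eq (Submodule.equivMapOfInjective φe hφe V)).symm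
  have hposinf : 0 < Module.finrank ℝ ↥(W ⊓ Usub) := by
    have h3 := Submodule.finrank_sup_add_finrank_inf_eq W Usub
    have h4 : Module.finrank ℝ ↥(W ⊔ Usub) ≤ q := by
      refine le_trans (Submodule.finrank_le _) (le_of_eq ?_)
      exact finrank_euclideanSpace_fin
    omega
  obtain ⟨⟨y, hy⟩, hy0⟩ := Module.finrank_pos_iff_exists_ne_zero.mp hposinf
  have hyW : y ∈ W := hy.1
  have hyU : y ∈ Usub := hy.2
  have hyne : y ≠ 0 := fun h => hy0 (Subtype.ext h)
  obtain ⟨x, hxV, hφx⟩ := hyW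
  have hxne : x ≠ 0 := by
    rintro rfl
    exact hyne (by rw [← hφx]; exact map_zero φe)
  -- chain of inequalities
  have e1 : t1 * (x ⬝ᵥ x) ≤ x ⬝ᵥ (M *ᵥ x) := by
    refine rayleigh_ge_span M hMh SM t1 ?_ x hxV
    rintro s ⟨i, hi, rfl⟩
    exact Tuple.monotone_sort hMh.eigenvalues
      (show (⟨p - j, by omega⟩ : Fin p) ≤ i from hi)
  have e5 : y ⬝ᵥ (N *ᵥ y) ≤ t2 * (y ⬝ᵥ y) := by
    refine rayleigh_le_span N hNh SN t2 ?_ y hyU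
    rintro s ⟨i, hi, rfl⟩
    exact Tuple.monotone_sort hNh.eigenvalues
      (show i ≤ (⟨q - j, by omega⟩ : Fin q) from hi)
  have e2 : x ⬝ᵥ (M *ᵥ x) = (X *ᵥ x) ⬝ᵥ (X *ᵥ x) := by
    rw [hMdef, ← mulVec_mulVec, dotProduct_mulVec, ← mulVec_transpose, transpose_transpose]
  have e4 : y ⬝ᵥ (N *ᵥ y) = (Y *ᵥ (φ x)) ⬝ᵥ (Y *ᵥ (φ x)) := by
    have : y = φ x := by rw [← hφx]; rfl
    rw [this, hNdef, ← mulVec_mulVec, dotProduct_mulVec, ← mulVec_transpose, transpose_transpose]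
  have e6 : y ⬝ᵥ y ≤ x ⬝ᵥ x := by
    have : y = φ x := by rw [← hφx]; rfl
    rw [this]; exact h2 x
  have e7 : 0 < x ⬝ᵥ x := by
    rcases lt_or_eq_of_le (Finset.sum_nonneg fun i _ => mul_self_nonneg (x i)) with h | h
    · exact h
    · exact absurd (dotProduct_self_eq_zero.mp h.symm) (by simpa using hxne)
  have e3 := h1 x
  have chain : (c^2 * t1) * (x ⬝ᵥ x) ≤ t2 * (x ⬝ᵥ x) := by
    calc (c^2 * t1) * (x ⬝ᵥ x) = c^2 * (t1 * (x ⬝ᵥ x)) := by ring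
    _ ≤ c^2 * (x ⬝ᵥ (M *ᵥ x)) := mul_le_mul_of_nonneg_left e1 (sq_nonneg c)
    _ = c^2 * ((X *ᵥ x) ⬝ᵥ (X *ᵥ x)) := by rw [e2]
    _ ≤ (Y *ᵥ (φ x)) ⬝ᵥ (Y *ᵥ (φ x)) := e3
    _ = y ⬝ᵥ (N *ᵥ y) := e4.symm
    _ ≤ t2 * (y ⬝ᵥ y) := e5
    _ ≤ t2 * (x ⬝ᵥ x) := mul_le_mul_of_nonneg_left e6 ht2nn
  exact le_of_mul_le_mul_right chain e7


lemma sigma_mulVec {m n : ℕ} (A : Matrix (Fin m) (Fin n) ℝ) (w : Fin n → ℝ) (a : Fin m) :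
    (svdSigma A *ᵥ w) a = if ha : (a : ℕ) < n then sval A ((a : ℕ) + 1) * w ⟨(a : ℕ), ha⟩
      else 0 := by
  simp only [mulVec, dotProduct, svdSigma, Matrix.of_apply]
  split
  case isTrue ha =>
    rw [Finset.sum_eq_single (⟨(a : ℕ), ha⟩ : Fin n)]
    · simp
    · intro b _ hb
      rw [if_neg (fun h => hb (Fin.ext h.symm)), zero_mul]
    · intro h; exact absurd (Finset.mem_univ _) h
  case isFalse ha =>
    apply Finset.sum_eq_zero; intro b _
    rw [if_neg (show ¬((a : ℕ) = (b : ℕ)) from fun h => ha (h ▸ b.isLt)), zero_mul]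

lemma sum_castLE {m k : ℕ} (hk : k ≤ m) (g : Fin m → ℝ)
    (h0 : ∀ a : Fin m, k ≤ (a : ℕ) → g a = 0) :
    ∑ a, g a = ∑ a' : Fin k, g (Fin.castLE hk a') := by
  rw [show (∑ a' : Fin k, g (Fin.castLE hk a'))
      = ∑ a ∈ Finset.univ.map (Fin.castLEEmb hk), g a from by rw [Finset.sum_map]; rfl]
  refine (Finset.sum_subset (Finset.subset_univ _) ?_).symm
  intro a _ ha
  apply h0
  by_contra hlt
  push_neg at hlt
  exact ha (Finset.mem_map.mpr ⟨⟨(a : ℕ), hlt⟩, Finset.mem_univ _, Fin.ext rfl⟩)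

lemma sum_castLE_le {m k : ℕ} (hk : k ≤ m) (g : Fin m → ℝ) (h0 : ∀ a, 0 ≤ g a) :
    ∑ a' : Fin k, g (Fin.castLE hk a') ≤ ∑ a, g a := by
  rw [show (∑ a' : Fin k, g (Fin.castLE hk a'))
      = ∑ a ∈ Finset.univ.map (Fin.castLEEmb hk), g a from by rw [Finset.sum_map]; rfl]
  exact Finset.sum_le_sum_of_subset_of_nonneg (Finset.subset_univ _) (fun i _ _ => h0 i)

lemma dot_orth {m n : ℕ} (S : Matrix (Fin m) (Fin n) ℝ) (hS : Sᵀ * S = 1) (v : Fin n → ℝ) :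
    (S *ᵥ v) ⬝ᵥ (S *ᵥ v) = v ⬝ᵥ v := by
  rw [dotProduct_mulVec, ← mulVec_transpose, mulVec_mulVec, hS, one_mulVec]


lemma sval_eq_zero_of_height_lt {m n : ℕ} (A : Matrix (Fin m) (Fin n) ℝ) {l : ℕ}
    (hm : m < l) (hl : l ≤ n) : sval A l = 0 := by
  have h1 : 1 ≤ l := by omega
  rw [sval_in A h1 hl]
  set hMh := Matrix.isHermitian_conjTranspose_mul_self A with hh
  set σ := Tuple.sort hMh.eigenvalues with hσ
  suffices h : hMh.eigenvalues (σ ⟨n - l, by omega⟩) = 0 by rw [h, Real.sqrt_zero]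
  by_contra hne
  have hpsd : (Aᵀ * A).PosSemidef := by
    have := Matrix.posSemidef_conjTranspose_mul_self A
    rwa [Matrix.conjTranspose_eq_transpose_of_trivial] at this
  have hpos : 0 < hMh.eigenvalues (σ ⟨n - l, by omega⟩) :=
    lt_of_le_of_ne (hpsd.eigenvalues_nonneg _) (Ne.symm hne)
  have hinj : Function.Injective (fun i : {i : Fin n // n - l ≤ (i : ℕ)} =>
      (⟨σ i.1, by
        have mono := Tuple.monotone_sort hMh.eigenvalues
          (show (⟨n - l, by omega⟩ : Fin n) ≤ i.1 from i.2)
        rw [← hσ] at mono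
        exact ne_of_gt (lt_of_lt_of_le hpos mono)⟩ :
        {i : Fin n // hMh.eigenvalues i ≠ 0})) := by
    intro u v huv
    exact Subtype.ext (σ.injective (congrArg Subtype.val huv))
  have hcard := Fintype.card_le_of_injective _ hinj
  rw [card_top h1 hl, ← Matrix.IsHermitian.rank_eq_card_non_zero_eigs] at hcard
  have hr : (Aᵀ * A).rank ≤ m := by
    rw [Matrix.rank_transpose_mul_self]
    exact le_trans (Matrix.rank_le_card_height A) (le_of_eq (Fintype.card_fin m))
  simp only [Matrix.conjTranspose_eq_transpose_of_trivial] at hcard hr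
  omega

/-- Singular values of products: `σ_j(FA) ≥ σ_k(A)·σ_j(F̂_{r,k})` and
`σ_j(AH) ≥ σ_l(A)·σ_j(Ĥ_{l,r})`, where `F̂ = F S_A`, `Ĥ = T_Aᵀ H`. -/
theorem singularValue_product_bounds {m n r : ℕ} (A : Matrix (Fin m) (Fin n) ℝ)
    (ρ : ℕ) (hρ : A.rank = ρ)
    (S : Matrix (Fin m) (Fin m) ℝ) (T : Matrix (Fin n) (Fin n) ℝ)
    (hS : Sᵀ * S = 1) (hT : Tᵀ * T = 1) (hA : A = S * svdSigma A * Tᵀ)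
    (F : Matrix (Fin r) (Fin m) ℝ) (H : Matrix (Fin n) (Fin r) ℝ) (hr : r ≤ ρ) :
    (∀ k (_ : 1 ≤ k) (hk : k ≤ m) (j : ℕ),
      sval A k * sval (lead (F * S) r k le_rfl hk) j ≤ sval (F * A) j) ∧
    (∀ l (_ : 1 ≤ l) (hl : l ≤ n) (j : ℕ),
      sval A l * sval (lead (Tᵀ * H) l r hl le_rfl) j ≤ sval (A * H) j) := by
  constructor
  · -- Part 1
    intro k hk1 hk j
    by_cases hkn : k ≤ n
    case neg =>
      rw [sval_out A (by omega : ¬(1 ≤ k ∧ k ≤ n)), zero_mul]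
      exact sval_nonneg _ _
    rcases eq_or_lt_of_le (sval_nonneg A k) with hz | hpos
    · rw [← hz, zero_mul]; exact sval_nonneg _ _
    set σk := sval A k with hσk
    set B := lead (F * S) r k le_rfl hk with hB
    have hd : ∀ b : ℕ, b < k → σk ≤ sval A (b + 1) ∧ 0 < sval A (b + 1) := by
      intro b hb
      have h := sval_antitone A (by omega : 1 ≤ b + 1) (by omega : b + 1 ≤ k) hkn
      exact ⟨h, lt_of_lt_of_le hpos h⟩
    set eFun : (Fin k → ℝ) → (Fin n → ℝ) := fun x b =>
      if hb : (b : ℕ) < k then σk * x ⟨(b : ℕ), hb⟩ / sval A ((b : ℕ) + 1) else 0 with heFun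
    have heAdd : ∀ x y, eFun (x + y) = eFun x + eFun y := by
      intro x y; funext b
      simp only [heFun, Pi.add_apply]
      split
      · ring
      · rw [add_zero]
    have heSmul : ∀ (c : ℝ) (x), eFun (c • x) = c • eFun x := by
      intro c x; funext b
      simp only [heFun, Pi.smul_apply, smul_eq_mul]
      split
      · ring
      · rw [mul_zero]
    set φ : (Fin k → ℝ) →ₗ[ℝ] (Fin n → ℝ) :=
      { toFun := fun x => T *ᵥ eFun x,
        map_add' := fun x y => by
          show T *ᵥ eFun (x + y) = T *ᵥ eFun x + T *ᵥ eFun y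
          rw [heAdd, mulVec_add],
        map_smul' := fun c x => by
          show T *ᵥ eFun (c • x) = c • (T *ᵥ eFun x)
          rw [heSmul, mulVec_smul] } with hφdef
    have hTinj : ∀ u v : Fin n → ℝ, T *ᵥ u = T *ᵥ v → u = v := by
      intro u v h
      have h2 := congrArg (fun w => Tᵀ *ᵥ w) h
      simpa [mulVec_mulVec, hT, one_mulVec] using h2
    have hφinj : Function.Injective φ := by
      intro x y hxy
      have he : eFun x = eFun y := hTinj _ _ hxy
      funext i
      have h3 := congrFun he (Fin.castLE hkn i)
      simp only [heFun, Fin.coe_castLE] at h3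
      rw [dif_pos i.isLt, dif_pos i.isLt] at h3
      simp only [Fin.eta] at h3
      have hdne := (hd i.1 i.isLt).2.ne'
      rw [div_eq_div_iff hdne hdne] at h3
      have h4 := mul_right_cancel₀ hdne h3
      exact mul_left_cancel₀ (ne_of_gt hpos) h4
    have hmain : ∀ x, (F * A) *ᵥ (φ x) = σk • (B *ᵥ x) := by
      intro x
      have hATp : (F * A) * T = (F * S) * svdSigma A := by
        conv_lhs => rw [hA]
        simp only [Matrix.mul_assoc]
        rw [hT, Matrix.mul_one]
      have hstep : (F * A) *ᵥ (φ x) = (F * S) *ᵥ (svdSigma A *ᵥ eFun x) := by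
        show (F * A) *ᵥ (T *ᵥ eFun x) = _
        rw [mulVec_mulVec, hATp, ← mulVec_mulVec]
      rw [hstep]
      have hSe : svdSigma A *ᵥ eFun x = fun a : Fin m =>
          if ha : (a : ℕ) < k then σk * x ⟨(a : ℕ), ha⟩ else 0 := by
        funext a
        rw [sigma_mulVec]
        split
        case isTrue han =>
          simp only [heFun]
          by_cases hak : (a : ℕ) < k
          · rw [dif_pos hak, dif_pos hak]
            have hdne := (hd (a : ℕ) hak).2.ne'
            field_simp
          · rw [dif_neg hak, dif_neg hak, mul_zero]
        case isFalse han =>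
          rw [dif_neg (by omega : ¬ (a : ℕ) < k)]
      rw [hSe]
      funext i
      show ∑ a, (F * S) i a * _ = σk * ((B *ᵥ x) i)
      rw [sum_castLE hk (fun a => (F * S) i a *
          (if ha : (a : ℕ) < k then σk * x ⟨(a : ℕ), ha⟩ else 0))
        (fun a ha => by simp only [dif_neg (show ¬ (a : ℕ) < k by omega), mul_zero])]
      show _ = σk * ∑ a' : Fin k, B i a' * x a'
      rw [Finset.mul_sum]
      refine Finset.sum_congr rfl fun a' _ => ?_
      rw [dif_pos (by simpa using a'.isLt : ((Fin.castLE hk a' : Fin m) : ℕ) < k)]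
      simp only [Fin.coe_castLE, Fin.eta, hB, lead, Matrix.submatrix_apply]
      have : Fin.castLE (le_refl r) i = i := rfl
      rw [this]
      ring
    refine sval_le_sval B (F * A) φ hφinj σk (le_of_lt hpos) (fun x => ?_) (fun x => ?_) j
    · rw [hmain x]
      refine le_of_eq ?_
      rw [smul_dotProduct, dotProduct_smul, smul_eq_mul, smul_eq_mul]
      ring
    · show (T *ᵥ eFun x) ⬝ᵥ (T *ᵥ eFun x) ≤ x ⬝ᵥ x
      rw [dot_orth T hT]
      have hvan : ∀ b : Fin n, k ≤ (b : ℕ) → eFun x b * eFun x b = 0 := by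
        intro b hb
        simp only [heFun]
        rw [dif_neg (by omega : ¬ (b : ℕ) < k), mul_zero]
      calc eFun x ⬝ᵥ eFun x
          = ∑ b' : Fin k, eFun x (Fin.castLE hkn b') * eFun x (Fin.castLE hkn b') :=
            sum_castLE hkn _ hvan
        _ ≤ ∑ b' : Fin k, x b' * x b' := by
            refine Finset.sum_le_sum fun b' _ => ?_
            simp only [heFun, Fin.coe_castLE]
            rw [dif_pos b'.isLt]
            simp only [Fin.eta]
            obtain ⟨hle, hdpos⟩ := hd b'.1 b'.isLt
            have hdd : 0 < sval A ((b' : ℕ) + 1) * sval A ((b' : ℕ) + 1) :=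
              mul_pos hdpos hdpos
            have hq : σk * x b' / sval A ((b' : ℕ) + 1) * (σk * x b' / sval A ((b' : ℕ) + 1))
                = (σk * σk) * (x b' * x b') / (sval A ((b' : ℕ) + 1) * sval A ((b' : ℕ) + 1)) := by
              ring
            rw [hq, div_le_iff₀ hdd]
            have h1' : σk * σk ≤ sval A ((b' : ℕ) + 1) * sval A ((b' : ℕ) + 1) :=
              mul_le_mul hle hle (le_of_lt hpos) (le_trans (le_of_lt hpos) hle)
            nlinarith [mul_self_nonneg (x b')]
        _ = x ⬝ᵥ x := rfl
  · -- Part 2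
    intro l hl1 hl j
    by_cases hlm : l ≤ m
    case neg =>
      rw [sval_eq_zero_of_height_lt A (by omega) hl, zero_mul]
      exact sval_nonneg _ _
    set L := lead (Tᵀ * H) l r hl le_rfl with hL
    set σl := sval A l with hσl
    refine sval_le_sval L (A * H) LinearMap.id Function.injective_id σl (sval_nonneg A l)
      (fun x => ?_) (fun x => le_refl _) j
    simp only [LinearMap.id_coe, id_eq]
    have hAH : (A * H) *ᵥ x = S *ᵥ (svdSigma A *ᵥ ((Tᵀ * H) *ᵥ x)) := by
      conv_lhs => rw [hA]
      simp only [Matrix.mul_assoc]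
      rw [← mulVec_mulVec, ← mulVec_mulVec]
    rw [hAH, dot_orth S hS]
    set w := (Tᵀ * H) *ᵥ x with hw
    have hsub := sum_castLE_le hlm (fun a => (svdSigma A *ᵥ w) a * (svdSigma A *ᵥ w) a)
      (fun a => mul_self_nonneg _)
    refine le_trans ?_ hsub
    rw [show (L *ᵥ x) ⬝ᵥ (L *ᵥ x) = ∑ a' : Fin l, (L *ᵥ x) a' * (L *ᵥ x) a' from rfl,
      Finset.mul_sum]
    refine Finset.sum_le_sum fun a' _ => ?_
    have hLa : (L *ᵥ x) a' = w (Fin.castLE hl a') := by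
      simp only [hL, lead, mulVec, dotProduct, hw, Matrix.submatrix_apply]
      rfl
    have hSg : (svdSigma A *ᵥ w) (Fin.castLE hlm a') = sval A ((a' : ℕ) + 1) * w (Fin.castLE hl a') := by
      rw [sigma_mulVec]
      have hcond : ((Fin.castLE hlm a' : Fin m) : ℕ) < n := by
        simp only [Fin.coe_castLE]
        have := a'.isLt
        omega
      have heq : (⟨((Fin.castLE hlm a' : Fin m) : ℕ), hcond⟩ : Fin n) = Fin.castLE hl a' :=
        Fin.ext (by simp)
      rw [dif_pos hcond, heq]
      simp [Fin.coe_castLE]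
    show σl ^ 2 * ((L *ᵥ x) a' * (L *ᵥ x) a') ≤
      (svdSigma A *ᵥ w) (Fin.castLE hlm a') * (svdSigma A *ᵥ w) (Fin.castLE hlm a')
    rw [hLa, hSg]
    have hdd : σl ≤ sval A ((a' : ℕ) + 1) :=
      sval_antitone A (by omega) (by have := a'.isLt; omega : (a' : ℕ) + 1 ≤ l) hl
    have hσnn : 0 ≤ σl := sval_nonneg A l
    have h1' : σl * σl ≤ sval A ((a' : ℕ) + 1) * sval A ((a' : ℕ) + 1) :=
      mul_le_mul hdd hdd hσnn (le_trans hσnn hdd)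
    nlinarith [mul_self_nonneg (w (Fin.castLE hl a'))]
end
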